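/- Let F be a finite field of cardinality m and let d > 1 be an integer. Then the special affine group SA(d,F) (the group of permutations of F^d of the form v ↦ A·v + t with A ∈ SL(d,F) and t ∈ F^d) has no proper normal subgroup whose index divides m^d − 1; i.e., every normal subgroup of SA(d,F) whose index divides m^d − 1 equals the whole group. -/

import Mathlib

open Matrix

/-- The special affine group `SA(d,F)`: the subgroup of the permutation group of
`F^d` consisting of all maps `v ↦ A ⬝ v + t` with `A ∈ SL(d,F)` and `t ∈ F^d`. -/
def specialAffineGroup (d : ℕ) (F : Type*) [Field F] [Fintype F] :
    Subgroup (Equiv.Perm (Fin d → F)) where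
  carrier := {σ | ∃ A : SpecialLinearGroup (Fin d) F, ∃ t : Fin d → F,
    ∀ v, σ v = (A : Matrix (Fin d) (Fin d) F) *ᵥ v + t}
  one_mem' := ⟨1, 0, fun v => by simp⟩
  mul_mem' := by
    rintro σ τ ⟨A, t, hA⟩ ⟨B, s, hB⟩
    refine ⟨A * B, (A : Matrix (Fin d) (Fin d) F) *ᵥ s + t, fun v => ?_⟩
    simp [Equiv.Perm.mul_apply, hA, hB, Matrix.mulVec_add, Matrix.mulVec_mulVec,
      add_assoc]
  inv_mem' := by
    rintro σ ⟨A, t, hA⟩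
    have key : ∀ x : Fin d → F, (A : Matrix (Fin d) (Fin d) F) *ᵥ
        (((A⁻¹ : SpecialLinearGroup (Fin d) F) : Matrix (Fin d) (Fin d) F) *ᵥ x) = x := by
      intro x
      rw [Matrix.mulVec_mulVec, ← Matrix.SpecialLinearGroup.coe_mul, mul_inv_cancel,
        Matrix.SpecialLinearGroup.coe_one, Matrix.one_mulVec]
    refine ⟨A⁻¹, -(((A⁻¹ : SpecialLinearGroup (Fin d) F) : Matrix (Fin d) (Fin d) F) *ᵥ t),
      fun v => ?_⟩
    apply σ.injective
    rw [Equiv.Perm.inv_def, Equiv.apply_symm_apply, hA, Matrix.mulVec_add, key, Matrix.mulVec_neg, key]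
    abel

set_option linter.unusedSectionVars false
namespace SAG

variable {d : ℕ} {F : Type*} [Field F] [Fintype F]

/-- The permutation `v ↦ A v`. -/
def linPerm (A : SpecialLinearGroup (Fin d) F) : Equiv.Perm (Fin d → F) where
  toFun v := (A : Matrix (Fin d) (Fin d) F) *ᵥ v
  invFun v := ((A⁻¹ : SpecialLinearGroup (Fin d) F) : Matrix (Fin d) (Fin d) F) *ᵥ v
  left_inv v := by
    show _ *ᵥ (_ *ᵥ v) = v
    rw [Matrix.mulVec_mulVec, ← Matrix.SpecialLinearGroup.coe_mul, inv_mul_cancel,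
      Matrix.SpecialLinearGroup.coe_one, Matrix.one_mulVec]
  right_inv v := by
    show _ *ᵥ (_ *ᵥ v) = v
    rw [Matrix.mulVec_mulVec, ← Matrix.SpecialLinearGroup.coe_mul, mul_inv_cancel,
      Matrix.SpecialLinearGroup.coe_one, Matrix.one_mulVec]

/-- The homomorphism `SL(d,F) →* SA(d,F)`. -/
def linG : SpecialLinearGroup (Fin d) F →* ↥(specialAffineGroup d F) where
  toFun A := ⟨linPerm A, A, 0, fun v => by simp [linPerm]⟩
  map_one' := by
    refine Subtype.ext (Equiv.ext fun v => ?_)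
    simp [linPerm]
  map_mul' A B := by
    refine Subtype.ext (Equiv.ext fun v => ?_)
    simp [linPerm, Equiv.Perm.mul_apply, Matrix.mulVec_mulVec]

/-- The translation permutation `v ↦ v + t`. -/
def transPerm (t : Fin d → F) : Equiv.Perm (Fin d → F) where
  toFun v := v + t
  invFun v := v - t
  left_inv v := add_sub_cancel_right v t
  right_inv v := sub_add_cancel v t

def transG (t : Fin d → F) : ↥(specialAffineGroup d F) :=
  ⟨transPerm t, 1, t, fun v => by simp [transPerm]⟩

lemma transG_mul (t s : Fin d → F) : transG t * transG s = transG (t + s) := by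
  refine Subtype.ext (Equiv.ext fun v => ?_)
  show (transPerm t) ((transPerm s) v) = transPerm (t + s) v
  simp [transPerm, add_assoc, add_comm s t]

lemma transG_zero : (transG 0 : ↥(specialAffineGroup d F)) = 1 := by
  refine Subtype.ext (Equiv.ext fun v => ?_)
  simp [transG, transPerm]

lemma transG_pow (t : Fin d → F) (n : ℕ) : transG t ^ n = transG (n • t) := by
  induction n with
  | zero => simp [transG_zero]
  | succ n ih => rw [pow_succ, ih, transG_mul, succ_nsmul]

lemma transvection_pow {i j : Fin d} (hij : i ≠ j) (c : F) (n : ℕ) :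
    (transvection i j c : Matrix (Fin d) (Fin d) F) ^ n = transvection i j (n • c) := by
  induction n with
  | zero => simp
  | succ n ih => rw [pow_succ, ih, transvection_mul_transvection_same _ _ hij, succ_nsmul]

/-- Constructor for `SL(d,F)`. -/
def mkSL (M : Matrix (Fin d) (Fin d) F) (h : Matrix.det M = 1) :
    SpecialLinearGroup (Fin d) F := ⟨M, h⟩

/-- The transvection as an element of `SL(d,F)`. -/
def tSL (i j : Fin d) (hij : i ≠ j) (c : F) : SpecialLinearGroup (Fin d) F :=
  ⟨transvection i j c, det_transvection_of_ne i j hij c⟩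

end SAG

section
variable {d : ℕ} {F : Type*} [Field F] [Fintype F]
open Matrix

/-- Helper matrix: identity outside the `{i,j}` block, with block `[p q; r s]`. -/
def Emat (i j : Fin d) (p q r s : F) : Matrix (Fin d) (Fin d) F :=
  Matrix.of fun k l =>
    if k = i then (if l = i then p else if l = j then q else 0)
    else if k = j then (if l = i then r else if l = j then s else 0)
    else if k = l then 1 else 0

lemma Emat_mul_tij {i j : Fin d} (hij : i ≠ j) (p q r s c : F) :
    Emat i j p q r s * transvection i j c = Emat i j p (q + c * p) r (s + c * r) := by
  ext k l
  by_cases hl : l = j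
  · subst hl
    rw [mul_transvection_apply_same]
    simp only [Emat, Matrix.of_apply, hij, Ne.symm hij]
    split_ifs <;> simp_all
  · rw [mul_transvection_apply_of_ne _ _ _ _ hl]
    simp only [Emat, Matrix.of_apply]
    split_ifs <;> simp_all

lemma Emat_mul_tji {i j : Fin d} (hij : i ≠ j) (p q r s c : F) :
    Emat i j p q r s * transvection j i c = Emat i j (p + c * q) q (r + c * s) s := by
  ext k l
  by_cases hl : l = i
  · subst hl
    rw [mul_transvection_apply_same]
    simp only [Emat, Matrix.of_apply, hij, Ne.symm hij]
    split_ifs <;> simp_all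
  · rw [mul_transvection_apply_of_ne _ _ _ _ hl]
    simp only [Emat, Matrix.of_apply]
    split_ifs <;> simp_all

lemma tij_eq_Emat {i j : Fin d} (hij : i ≠ j) (c : F) :
    (transvection i j c : Matrix (Fin d) (Fin d) F) = Emat i j 1 c 0 1 := by
  ext k l
  simp only [transvection, Emat, Matrix.add_apply, Matrix.one_apply, Matrix.single,
    Matrix.of_apply]
  split_ifs <;> first | grind | simp

lemma Emat_diag {i j : Fin d} (hij : i ≠ j) (p s : F) :
    Emat i j p 0 0 s
      = diagonal (Function.update (Function.update (1 : Fin d → F) i p) j s) := by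
  ext k l
  simp only [Emat, Matrix.of_apply, Matrix.diagonal_apply, Function.update_apply, Pi.one_apply]
  split_ifs <;> simp_all

/-- Whitehead-style lemma: `diag(…,a,…,a⁻¹,…)` is a product of six transvections. -/
lemma diag_pair_eq_prod_transvection {i j : Fin d} (hij : i ≠ j) (a : F) (ha : a ≠ 0) :
    diagonal (Function.update (Function.update (1 : Fin d → F) i a) j a⁻¹)
      = transvection i j a * transvection j i (-a⁻¹) * transvection i j a *
        transvection i j (-1) * transvection j i 1 * transvection i j (-1) := by
  have h1 : (transvection i j a : Matrix (Fin d) (Fin d) F) * transvection j i (-a⁻¹)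
      = Emat i j 0 a (-a⁻¹) 1 := by
    rw [tij_eq_Emat hij, Emat_mul_tji hij]
    congr 1 <;> field_simp <;> ring
  have h2 : (Emat i j 0 a (-a⁻¹) 1 : Matrix (Fin d) (Fin d) F) * transvection i j a
      = Emat i j 0 a (-a⁻¹) 0 := by
    rw [Emat_mul_tij hij]
    congr 1 <;> field_simp <;> ring
  have h3 : (Emat i j 0 a (-a⁻¹) 0 : Matrix (Fin d) (Fin d) F) * transvection i j (-1)
      = Emat i j 0 a (-a⁻¹) a⁻¹ := by
    rw [Emat_mul_tij hij]
    congr 1 <;> ring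
  have h4 : (Emat i j 0 a (-a⁻¹) a⁻¹ : Matrix (Fin d) (Fin d) F) * transvection j i 1
      = Emat i j a a 0 a⁻¹ := by
    rw [Emat_mul_tji hij]
    congr 1 <;> ring
  have h5 : (Emat i j a a 0 a⁻¹ : Matrix (Fin d) (Fin d) F) * transvection i j (-1)
      = Emat i j a 0 0 a⁻¹ := by
    rw [Emat_mul_tij hij]
    congr 1 <;> ring
  rw [h1, h2, h3, h4, h5, Emat_diag hij]
end

namespace SAG
open Matrix
variable {d : ℕ} {F : Type*} [Field F] [Fintype F]

lemma master (H : Subgroup ↥(specialAffineGroup d F))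
    (hgen : ∀ g : ↥(specialAffineGroup d F), g ^ ringChar F = 1 → g ∈ H) : H = ⊤ := by
  haveI := Classical.decEq F
  haveI : CharP F (ringChar F) := ringChar.charP F
  set p := ringChar F with hp
  -- translations are in H
  have htrans : ∀ t : Fin d → F, transG t ∈ H := by
    intro t
    apply hgen
    rw [transG_pow]
    have h0 : (p • t) = 0 := by
      funext k
      simp [CharP.cast_eq_zero F p]
    rw [h0, transG_zero]
  -- transvections are in H
  have htv : ∀ (i j : Fin d) (hij : i ≠ j) (c : F), linG (tSL i j hij c) ∈ H := by
    intro i j hij c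
    apply hgen
    have hT : tSL i j hij c ^ p = 1 := by
      apply Subtype.ext
      show (transvection i j c) ^ p = (1 : Matrix (Fin d) (Fin d) F)
      have h0 : (p • c) = 0 := by simp [CharP.cast_eq_zero F p]
      rw [transvection_pow hij, h0, transvection_zero]
    rw [← _root_.map_pow, hT, _root_.map_one]
  -- the `diag(a, a⁻¹)`-type matrices are in H
  have hdiagpair : ∀ (i j : Fin d) (hij : i ≠ j) (a : F) (ha : a ≠ 0)
      (hdet : det (diagonal (Function.update (Function.update (1 : Fin d → F) i a) j a⁻¹)) = 1),
      linG ⟨_, hdet⟩ ∈ H := by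
    intro i j hij a ha hdet
    have key := diag_pair_eq_prod_transvection hij a ha
    have hsp : (⟨_, hdet⟩ : SpecialLinearGroup (Fin d) F)
        = (tSL i j hij a * tSL j i hij.symm (-a⁻¹) * tSL i j hij a *
          tSL i j hij (-1) * tSL j i hij.symm 1 * tSL i j hij (-1) : SpecialLinearGroup (Fin d) F) := by
      apply Subtype.ext
      exact key
    rw [hsp]
    simp only [_root_.map_mul]
    exact H.mul_mem (H.mul_mem (H.mul_mem (H.mul_mem (H.mul_mem
      (htv _ _ _ _) (htv _ _ _ _)) (htv _ _ _ _)) (htv _ _ _ _)) (htv _ _ _ _)) (htv _ _ _ _)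
  -- all diagonal matrices of determinant 1 are in H
  have hdiag : ∀ (N : ℕ) (D : Fin d → F),
      (Finset.univ.filter fun k => D k ≠ 1).card ≤ N →
      ∀ (h : det (diagonal D) = 1), linG ⟨diagonal D, h⟩ ∈ H := by
    intro N
    induction N with
    | zero =>
      intro D hcard h
      have hD1 : D = 1 := by
        funext k
        show D k = 1
        by_contra hk
        have hmem : k ∈ Finset.univ.filter fun k => D k ≠ 1 := by
          simp only [Finset.mem_filter, Finset.mem_univ, true_and]
          exact hk
        rw [Nat.le_zero, Finset.card_eq_zero] at hcard
        rw [hcard] at hmem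
        exact absurd hmem (Finset.notMem_empty k)
      subst hD1
      have h1 : (⟨diagonal (1 : Fin d → F), h⟩ : SpecialLinearGroup (Fin d) F)
          = (1 : SpecialLinearGroup (Fin d) F) :=
        Subtype.ext (by show diagonal _ = _; rw [show (1 : Fin d → F) = fun _ => (1:F) from rfl,
          Matrix.diagonal_one]; rfl)
      rw [h1, _root_.map_one]
      exact H.one_mem
    | succ N ih =>
      intro D hcard h
      rcases le_or_gt (Finset.univ.filter fun k => D k ≠ 1).card N with hle | hgt
      · exact ih D hle h
      have hprod : ∏ k, D k = 1 := by rwa [det_diagonal] at h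
      have hne0 : ∀ k, D k ≠ 0 := by
        intro k hk
        exact one_ne_zero (hprod.symm.trans (Finset.prod_eq_zero (Finset.mem_univ k) hk))
      rcases eq_or_lt_of_le (show 1 ≤ (Finset.univ.filter fun k => D k ≠ 1).card by omega)
        with hone | h2
      · -- exactly one non-one entry : contradiction with product 1
        obtain ⟨i, hfil⟩ := Finset.card_eq_one.mp hone.symm
        have hDi : D i ≠ 1 := by
          have hmem : i ∈ ({i} : Finset (Fin d)) := Finset.mem_singleton_self i
          rw [← hfil, Finset.mem_filter] at hmem
          exact hmem.2
        have hothers : ∀ b, b ≠ i → D b = 1 := by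
          intro b hb
          by_contra hbne
          have hmem : b ∈ ({i} : Finset (Fin d)) := by
            rw [← hfil, Finset.mem_filter]
            exact ⟨Finset.mem_univ b, hbne⟩
          exact hb (Finset.mem_singleton.mp hmem)
        have hPi : ∏ k, D k = D i :=
          Finset.prod_eq_single i (fun b _ hb => hothers b hb)
            (fun hni => absurd (Finset.mem_univ i) hni)
        exact absurd (hPi.symm.trans hprod) hDi
      · -- at least two non-one entries
        obtain ⟨i, hi, j, hj, hij⟩ := Finset.one_lt_card.mp h2
        simp only [Finset.mem_filter, Finset.mem_univ, true_and] at hi hj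
        have hane : D i ≠ 0 := hne0 i
        set Dh : Fin d → F :=
          Function.update (Function.update (1 : Fin d → F) i (D i)) j (D i)⁻¹ with hDhdef
        set D' : Fin d → F := Function.update (Function.update D i 1) j (D i * D j) with hD'def
        have hfact : (fun k => Dh k * D' k) = D := by
          funext k
          show Dh k * D' k = D k
          rcases eq_or_ne k i with rfl | hki
          · simp [Dh, D', Function.update_apply, hij]
          rcases eq_or_ne k j with rfl | hkj
          · simp [Dh, D', Function.update_apply, hij, inv_mul_cancel_left₀ hane]
          · simp [Dh, D', Function.update_apply, hki, hkj]
        have hdetfact : diagonal D = diagonal Dh * diagonal D' := by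
          rw [diagonal_mul_diagonal, hfact]
        have hdetDh : det (diagonal Dh) = 1 := by
          rw [hDhdef, diag_pair_eq_prod_transvection hij (D i) hane]
          simp [det_mul, det_transvection_of_ne _ _ hij, det_transvection_of_ne _ _ hij.symm]
        have hdetD' : det (diagonal D') = 1 := by
          have h3 := h
          rw [hdetfact, det_mul, hdetDh, one_mul] at h3
          exact h3
        have hcard' : (Finset.univ.filter fun k => D' k ≠ 1).card ≤ N := by
          have hsub : (Finset.univ.filter fun k => D' k ≠ 1)
              ⊆ (Finset.univ.filter fun k => D k ≠ 1).erase i := by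
            intro k hk
            simp only [Finset.mem_filter, Finset.mem_erase, Finset.mem_univ, true_and] at hk ⊢
            rcases eq_or_ne k i with rfl | hki
            · exfalso
              apply hk
              simp [D', Function.update_apply, hij]
            refine ⟨hki, ?_⟩
            rcases eq_or_ne k j with rfl | hkj
            · exact hj
            · intro hDk
              apply hk
              simp [D', Function.update_apply, hki, hkj, hDk]
          have h4 := Finset.card_le_card hsub
          have h5 : i ∈ Finset.univ.filter fun k => D k ≠ 1 := by
            simp [hi]
          have h6 := Finset.card_erase_of_mem h5
          omega
        have hsplit : (⟨diagonal D, h⟩ : SpecialLinearGroup (Fin d) F)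
            = mkSL (diagonal Dh) hdetDh * mkSL (diagonal D') hdetD' := by
          apply Subtype.ext
          show diagonal D = diagonal Dh * diagonal D'
          exact hdetfact
        rw [hsplit, _root_.map_mul]
        exact H.mul_mem (hdiagpair i j hij (D i) hane hdetDh) (ih D' hcard' hdetD')
  -- products of transvections are in H
  have hlist : ∀ (L : List (TransvectionStruct (Fin d) F))
      (h : det ((L.map TransvectionStruct.toMatrix).prod) = 1),
      linG ⟨(L.map TransvectionStruct.toMatrix).prod, h⟩ ∈ H := by
    intro L
    induction L with
    | nil =>
      intro h
      have h1 : (⟨([] : List (TransvectionStruct (Fin d) F)).map TransvectionStruct.toMatrix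
            |>.prod, h⟩ : SpecialLinearGroup (Fin d) F) = (1 : SpecialLinearGroup (Fin d) F) :=
        Subtype.ext (by simp)
      rw [h1, _root_.map_one]
      exact H.one_mem
    | cons t L ihL =>
      intro h
      have h1 : det (TransvectionStruct.toMatrix t) = 1 := TransvectionStruct.det t
      have h2 : det ((L.map TransvectionStruct.toMatrix).prod) = 1 :=
        TransvectionStruct.det_toMatrix_prod L
      have h3 : (⟨_, h⟩ : SpecialLinearGroup (Fin d) F)
          = mkSL (TransvectionStruct.toMatrix t) h1
            * mkSL ((L.map TransvectionStruct.toMatrix).prod) h2 := by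
        apply Subtype.ext
        show ((t :: L).map TransvectionStruct.toMatrix).prod
          = TransvectionStruct.toMatrix t * (L.map TransvectionStruct.toMatrix).prod
        simp
      rw [h3, _root_.map_mul]
      refine H.mul_mem ?_ (ihL h2)
      have h4 : mkSL (TransvectionStruct.toMatrix t) h1 = tSL t.i t.j t.hij t.c :=
        Subtype.ext rfl
      rw [h4]
      exact htv _ _ _ _
  -- all of SL(d,F) is in H
  have hSL : ∀ A : SpecialLinearGroup (Fin d) F, linG A ∈ H := by
    rintro ⟨M, hM⟩
    obtain ⟨L, L', D0, hLD⟩ := Matrix.Pivot.exists_list_transvec_mul_diagonal_mul_list_transvec M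
    have hL := TransvectionStruct.det_toMatrix_prod L
    have hL' := TransvectionStruct.det_toMatrix_prod L'
    have hD0 : det (diagonal D0) = 1 := by
      have h5 := hM
      rw [hLD, det_mul, det_mul, hL, hL', one_mul, mul_one] at h5
      exact h5
    have hsplit : (⟨M, hM⟩ : SpecialLinearGroup (Fin d) F)
        = mkSL ((L.map TransvectionStruct.toMatrix).prod) hL * mkSL (diagonal D0) hD0
          * mkSL ((L'.map TransvectionStruct.toMatrix).prod) hL' := by
      apply Subtype.ext
      show M = (L.map TransvectionStruct.toMatrix).prod * diagonal D0
          * (L'.map TransvectionStruct.toMatrix).prod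
      exact hLD
    rw [hsplit, _root_.map_mul, _root_.map_mul]
    exact H.mul_mem (H.mul_mem (hlist L hL) (hdiag _ D0 le_rfl hD0)) (hlist L' hL')
  -- conclude
  rw [eq_top_iff]
  intro g _
  obtain ⟨A, t, hA⟩ := g.2
  have hdec : g = transG t * linG A := by
    apply Subtype.ext
    apply Equiv.ext
    intro v
    have h6 : ((transG t * linG A : ↥(specialAffineGroup d F)) : Equiv.Perm (Fin d → F)) v
        = (A : Matrix (Fin d) (Fin d) F) *ᵥ v + t := by
      simp [transG, linG, transPerm, linPerm, Equiv.Perm.mul_apply]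
    rw [h6, ← hA v]
  rw [hdec]
  exact H.mul_mem (htrans t) (hSL A)

end SAG

/-- `SA(d,F)` (for a finite field `F` with `m` elements and `d > 1`) has no proper
normal subgroup whose index divides `m^d - 1`: every such normal subgroup is the
whole group. -/
theorem specialAffineGroup_no_proper_normal_subgroup_of_index_dvd
    (F : Type*) [Field F] [Fintype F] (m : ℕ) (hm : Fintype.card F = m)
    (d : ℕ) (hd : 1 < d) (H : Subgroup (specialAffineGroup d F)) (hH : H.Normal)
    (hdvd : H.index ∣ m ^ d - 1) : H = ⊤ := by
  haveI := hH
  haveI : CharP F (ringChar F) := ringChar.charP F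
  obtain ⟨n, hprime, hcard⟩ := FiniteField.card F (ringChar F)
  subst hm
  have hpm : ringChar F ∣ Fintype.card F := by
    rw [hcard]; exact dvd_pow_self _ n.2.ne'
  have hpnd : ¬ ringChar F ∣ Fintype.card F ^ d - 1 := by
    intro hp1
    have h1 : ringChar F ∣ Fintype.card F ^ d := dvd_pow hpm (by omega)
    have h2 := Nat.dvd_sub h1 hp1
    have hge : 1 ≤ Fintype.card F ^ d := Nat.one_le_pow _ _ Fintype.card_pos
    rw [Nat.sub_sub_self hge] at h2
    exact absurd (Nat.dvd_one.mp h2) hprime.one_lt.ne'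
  apply SAG.master
  intro g hg
  have h1 : (QuotientGroup.mk' H) g ^ ringChar F = 1 := by
    rw [← _root_.map_pow, hg, _root_.map_one]
  have h2 : orderOf ((QuotientGroup.mk' H) g) ∣ ringChar F := orderOf_dvd_of_pow_eq_one h1
  have h3 : orderOf ((QuotientGroup.mk' H) g) ∣ Fintype.card F ^ d - 1 :=
    (orderOf_dvd_natCard _).trans hdvd
  rcases Nat.Prime.eq_one_or_self_of_dvd hprime _ h2 with h4 | h4
  · have h5 : (QuotientGroup.mk' H) g = 1 := orderOf_eq_one_iff.mp h4
    exact (QuotientGroup.eq_one_iff g).mp h5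
  · rw [h4] at h3
    exact absurd h3 hpnd
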